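/- arXiv:1910.03740 — 8 statements merged into one kernel-verified Lean document; each statement's English description precedes it below -/
import Mathlib

section
/- Let s ≥ 2 and let K be a clique of size 128 in the Keller graph G_{7,s}. Then exactly 64 vertices of K have first coordinate in {0,1,...,s-1} and exactly 64 vertices of K have first coordinate in {s, s+1, ..., 2s-1}. -/
/-- The Keller graph `G_{n,s}`: vertices are `n`-tuples with entries in `{0,…,2s-1}`,
two vertices adjacent iff they differ by exactly `s` in at least one coordinate
and differ in at least two coordinates. -/
def kellerGraph (n s : ℕ) : SimpleGraph (Fin n → Fin (2 * s)) where
  Adj x y :=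
    (∃ i, (x i : ℕ) + s = (y i : ℕ) ∨ (y i : ℕ) + s = (x i : ℕ)) ∧
    (∃ i j, i ≠ j ∧ x i ≠ y i ∧ x j ≠ y j)
  symm := by
    refine ⟨?_⟩
    rintro x y ⟨⟨i, h⟩, j, k, hjk, hj, hk⟩
    exact ⟨⟨i, Or.symm h⟩, j, k, hjk, hj.symm, hk.symm⟩
  loopless := by
    refine ⟨?_⟩
    rintro x ⟨-, j, k, hjk, hj, hk⟩
    exact hj rfl

/-- In any clique of size 128 in `G_{7,s}` (`s ≥ 2`), exactly 64 vertices have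
first coordinate in `{0,…,s-1}` and exactly 64 have first coordinate in
`{s,…,2s-1}`. -/
theorem keller_clique_split (s : ℕ) (hs : 2 ≤ s)
    (K : Finset (Fin 7 → Fin (2 * s))) (hK : (kellerGraph 7 s).IsNClique 128 K) :
    (K.filter (fun v => (v 0 : ℕ) < s)).card = 64 ∧
    (K.filter (fun v => s ≤ (v 0 : ℕ))).card = 64 := by
  classical
  set Φ : (Fin 7 → Fin (2 * s)) → (Fin 7 → Bool) :=
    fun v i => decide ((v i : ℕ) < s) with hΦ
  have hinj : Set.InjOn Φ (K : Set (Fin 7 → Fin (2 * s))) := by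
    intro x hx y hy hxy
    by_contra hne
    obtain ⟨⟨i, hi⟩, -⟩ := hK.1 hx hy hne
    have hxi : ((x i : ℕ) < s) ↔ ((y i : ℕ) < s) := by
      have := congrFun hxy i
      simpa [hΦ, decide_eq_decide] using this
    have hx2 : (x i : ℕ) < 2 * s := (x i).isLt
    have hy2 : (y i : ℕ) < 2 * s := (y i).isLt
    omega
  have hcard : K.card = 128 := hK.2
  have himg : K.image Φ = Finset.univ := by
    apply Finset.eq_univ_of_card
    rw [Finset.card_image_of_injOn hinj, hcard]
    simp [Fintype.card_fun]
  have key : ∀ (P : (Fin 7 → Fin (2 * s)) → Prop) (Q : (Fin 7 → Bool) → Prop)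
      [DecidablePred P] [DecidablePred Q], (∀ v, P v ↔ Q (Φ v)) →
      (K.filter P).card = (Finset.univ.filter Q).card := by
    intro P Q _ _ hPQ
    have himg2 : (K.filter P).image Φ = Finset.univ.filter Q := by
      ext b
      simp only [Finset.mem_image, Finset.mem_filter, Finset.mem_univ, true_and]
      constructor
      · rintro ⟨v, ⟨hvK, hvP⟩, rfl⟩
        exact (hPQ v).mp hvP
      · intro hQ
        have hb : b ∈ K.image Φ := by rw [himg]; exact Finset.mem_univ b
        obtain ⟨v, hvK, rfl⟩ := Finset.mem_image.mp hb
        exact ⟨v, ⟨hvK, (hPQ v).mpr hQ⟩, rfl⟩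
    calc (K.filter P).card
        = ((K.filter P).image Φ).card :=
          (Finset.card_image_of_injOn (hinj.mono (fun v hv =>
            Finset.mem_coe.mpr ((Finset.mem_filter.mp (Finset.mem_coe.mp hv)).1)))).symm
      _ = (Finset.univ.filter Q).card := by rw [himg2]
  constructor
  · rw [key (fun v => (v 0 : ℕ) < s) (fun b => b 0 = true)
      (fun v => by simp [hΦ])]
    decide
  · rw [key (fun v => s ≤ (v 0 : ℕ)) (fun b => b 0 = false)
      (fun v => by simp [hΦ])]
    decide
end

section
/- Let d ≥ 1 and let T ⊆ ℝ^d be a collection of cube corners, and fix i ∈ {1,...,d}. Then {C^d(t) : t ∈ T} is a cube tiling of ℝ^d if and only if for every x ∈ ℝ^d the set T_i(x) is an i-lattice. -/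
/-- The half-open unit cube `[x_1, x_1+1) × ⋯ × [x_d, x_d+1)` with corner `x`. -/
def cube (d : ℕ) (x : Fin d → ℝ) : Set (Fin d → ℝ) :=
  {y | ∀ i, x i ≤ y i ∧ y i < x i + 1}

/-- `T` is a cube tiling of `ℝ^d`: the cubes with corners in `T` are pairwise
disjoint and their union is all of `ℝ^d`. -/
def IsTiling (d : ℕ) (T : Set (Fin d → ℝ)) : Prop :=
  (T.Pairwise fun t t' => Disjoint (cube d t) (cube d t')) ∧
  (⋃ t ∈ T, cube d t) = Set.univ

/-- The `i`-th standard basis vector of `ℝ^d`. -/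
def stdBasis (d : ℕ) (i : Fin d) : Fin d → ℝ := fun j => if j = i then 1 else 0

/-- Two cubes (given by their corners `x`, `y`) faceshare if `y = x ± e_i`
for some standard basis vector `e_i`. -/
def Faceshare (d : ℕ) (x y : Fin d → ℝ) : Prop :=
  ∃ i : Fin d, y = x + stdBasis d i ∨ y = x - stdBasis d i

/-- A tiling is faceshare-free if no two distinct cubes of it faceshare. -/
def FaceshareFree (d : ℕ) (T : Set (Fin d → ℝ)) : Prop :=
  ∀ t ∈ T, ∀ t' ∈ T, t ≠ t' → ¬ Faceshare d t t'

/-- A tiling `T` is periodic if `t + 2z ∈ T` for every `t ∈ T` and `z ∈ ℤ^d`. -/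
def PeriodicTiling (d : ℕ) (T : Set (Fin d → ℝ)) : Prop :=
  ∀ t ∈ T, ∀ z : Fin d → ℤ, (fun j => t j + 2 * (z j : ℝ)) ∈ T

/-- A tiling is `s`-discrete if for each coordinate `i`, the values `t i` modulo 1
over `t ∈ T` take at most `s` distinct values. -/
def SDiscrete (d s : ℕ) (T : Set (Fin d → ℝ)) : Prop :=
  ∀ i : Fin d, ∃ S : Finset ℝ, S.card ≤ s ∧ ∀ t ∈ T, Int.fract (t i) ∈ S

/-- The axis-parallel line through `x` in direction `i`. -/
def line (d : ℕ) (i : Fin d) (x : Fin d → ℝ) : Set (Fin d → ℝ) :=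
  {y | ∀ j, j ≠ i → y j = x j}

/-- `T_i(x)`: the corners of `T` whose cubes meet the line `ℓ_i(x)`. -/
def cornersMeetingLine (d : ℕ) (T : Set (Fin d → ℝ)) (i : Fin d) (x : Fin d → ℝ) :
    Set (Fin d → ℝ) :=
  {t | t ∈ T ∧ (cube d t ∩ line d i x).Nonempty}

/-- `S` is an `i`-lattice: there is `a ∈ ℝ` with `t i ≡ a (mod 1)` for all `t ∈ S`,
and for each integer `y` exactly one `t ∈ S` has `t i = a + y`. -/
def IsILattice (d : ℕ) (i : Fin d) (S : Set (Fin d → ℝ)) : Prop :=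
  ∃ a : ℝ, (∀ t ∈ S, ∃ z : ℤ, t i = a + (z : ℝ)) ∧
    ∀ y : ℤ, ∃! t, t ∈ S ∧ t i = a + (y : ℝ)

lemma lattice_aux (d : ℕ) (i : Fin d) (C : Set (Fin d → ℝ))
    (cover : ∀ r : ℝ, ∃ t ∈ C, t i ≤ r ∧ r < t i + 1)
    (uniq : ∀ r : ℝ, ∀ t ∈ C, ∀ t' ∈ C, t i ≤ r → r < t i + 1 → t' i ≤ r → r < t' i + 1 → t = t') :
    IsILattice d i C := by
  have B : ∀ t ∈ C, ∀ t' ∈ C, t i ≤ t' i → t' i < t i + 1 → t = t' := fun t ht t' ht' h1 h2 =>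
    uniq (t' i) t ht t' ht' h1 h2 le_rfl (by linarith)
  have succ : ∀ t ∈ C, ∃ t' ∈ C, t' i = t i + 1 := by
    intro t ht
    obtain ⟨t', ht', h1, h2⟩ := cover (t i + 1)
    refine ⟨t', ht', ?_⟩
    by_contra hne
    have hlt : t' i < t i + 1 := lt_of_le_of_ne h1 hne
    have hgt : t i < t' i := by linarith
    have heq := B t ht t' ht' (le_of_lt hgt) hlt
    rw [heq] at hgt; linarith
  have pred : ∀ t ∈ C, ∃ t' ∈ C, t' i = t i - 1 := by
    intro t ht
    obtain ⟨u, hu, h1, h2⟩ := cover (t i - 1)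
    obtain ⟨u', hu', hu'e⟩ := succ u hu
    have heq : u' = t := B u' hu' t ht (by linarith) (by linarith)
    refine ⟨u, hu, ?_⟩
    have : u' i = t i := by rw [heq]
    linarith [hu'e]
  have intcl : ∀ t ∈ C, ∀ z : ℤ, ∃ t' ∈ C, t' i = t i + z := by
    intro t ht z
    induction z using Int.induction_on with
    | zero => exact ⟨t, ht, by simp⟩
    | succ n ih =>
      obtain ⟨t', ht', he⟩ := ih
      obtain ⟨t'', ht'', he'⟩ := succ t' ht'
      exact ⟨t'', ht'', by rw [he', he]; push_cast; ring⟩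
    | pred n ih =>
      obtain ⟨t', ht', he⟩ := ih
      obtain ⟨t'', ht'', he'⟩ := pred t' ht'
      exact ⟨t'', ht'', by rw [he', he]; push_cast; ring⟩
  obtain ⟨t₀, ht₀, -, -⟩ := cover 0
  refine ⟨t₀ i, ?_, ?_⟩
  · intro t ht
    refine ⟨⌊t i - t₀ i⌋, ?_⟩
    obtain ⟨t', ht', he⟩ := intcl t₀ ht₀ ⌊t i - t₀ i⌋
    have hf1 := Int.floor_le (t i - t₀ i)
    have hf2 := Int.lt_floor_add_one (t i - t₀ i)
    have h1 : t' i ≤ t i := by rw [he]; linarith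
    have h2 : t i < t' i + 1 := by rw [he]; linarith
    have heq := B t' ht' t ht h1 h2
    rw [heq] at he
    exact he
  · intro y
    obtain ⟨t', ht', he⟩ := intcl t₀ ht₀ y
    refine ⟨t', ⟨ht', he⟩, ?_⟩
    rintro s ⟨hs, hse⟩
    exact (B t' ht' s hs (by rw [he, hse]) (by rw [he, hse]; linarith)).symm

/-- For `d ≥ 1` and a fixed coordinate `i`, `T` is a cube tiling of `ℝ^d` iff for
every `x ∈ ℝ^d` the set `T_i(x)` is an `i`-lattice. -/
theorem tiling_iff_lattice (d : ℕ) (hd : 1 ≤ d) (T : Set (Fin d → ℝ)) (i : Fin d) :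
    IsTiling d T ↔ ∀ x : Fin d → ℝ, IsILattice d i (cornersMeetingLine d T i x) := by
  constructor
  · rintro ⟨hdisj, hcov⟩ x
    apply lattice_aux
    · -- cover
      intro r
      have hx : Function.update x i r ∈ ⋃ t ∈ T, cube d t := by rw [hcov]; trivial
      obtain ⟨t, htT, hct⟩ := Set.mem_iUnion₂.mp hx
      refine ⟨t, ⟨htT, Function.update x i r, hct, ?_⟩, ?_, ?_⟩
      · intro j hj; exact Function.update_of_ne hj r x
      · have := (hct i).1; rwa [Function.update_self] at this
      · have := (hct i).2; rwa [Function.update_self] at this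
    · -- uniq
      rintro r t ⟨htT, p, hpc, hpl⟩ t' ⟨ht'T, p', hpc', hpl'⟩ h1 h2 h3 h4
      by_contra hne
      have hy : Function.update x i r ∈ cube d t := by
        intro j
        by_cases hj : j = i
        · subst hj; rw [Function.update_self]; exact ⟨h1, h2⟩
        · rw [Function.update_of_ne hj, ← hpl j hj]; exact hpc j
      have hy' : Function.update x i r ∈ cube d t' := by
        intro j
        by_cases hj : j = i
        · subst hj; rw [Function.update_self]; exact ⟨h3, h4⟩
        · rw [Function.update_of_ne hj, ← hpl' j hj]; exact hpc' j
      exact Set.disjoint_left.mp (hdisj htT ht'T hne) hy hy'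
  · intro h
    constructor
    · -- pairwise disjoint
      intro t htT t' ht'T hne
      rw [Set.disjoint_left]
      intro y hy hy'
      obtain ⟨a, hmod, huniq⟩ := h y
      have hyl : y ∈ line d i y := fun j _ => rfl
      have hmt : t ∈ cornersMeetingLine d T i y := ⟨htT, y, hy, hyl⟩
      have hmt' : t' ∈ cornersMeetingLine d T i y := ⟨ht'T, y, hy', hyl⟩
      obtain ⟨z, hz⟩ := hmod t hmt
      obtain ⟨z', hz'⟩ := hmod t' hmt'
      have hi := hy i
      have hi' := hy' i
      have hzz : z = z' := by
        have h1 : (z : ℝ) < (z' : ℝ) + 1 := by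
          rw [hz] at hi; rw [hz'] at hi'; linarith [hi.1, hi.2, hi'.1, hi'.2]
        have h2 : (z' : ℝ) < (z : ℝ) + 1 := by
          rw [hz] at hi; rw [hz'] at hi'; linarith [hi.1, hi.2, hi'.1, hi'.2]
        have h1' : z < z' + 1 := by exact_mod_cast h1
        have h2' : z' < z + 1 := by exact_mod_cast h2
        omega
      obtain ⟨u, -, hu⟩ := huniq z
      have e1 : t = u := hu t ⟨hmt, hz⟩
      have e2 : t' = u := hu t' ⟨hmt', by rw [hz', hzz]⟩
      exact hne (e1.trans e2.symm)
    · -- covering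
      ext x
      simp only [Set.mem_iUnion, Set.mem_univ, iff_true]
      obtain ⟨a, hmod, huniq⟩ := h x
      obtain ⟨t, ⟨⟨htT, p, hpc, hpl⟩, hti⟩, -⟩ := huniq ⌊x i - a⌋
      refine ⟨t, htT, ?_⟩
      intro j
      by_cases hj : j = i
      · subst hj
        rw [hti]
        constructor
        · linarith [Int.floor_le (x j - a)]
        · linarith [Int.lt_floor_add_one (x j - a)]
      · rw [← hpl j hj]; exact hpc j
end

section
/- Let T ⊆ ℝ^d be a cube tiling of ℝ^d. For every integer point x ∈ ℤ^d and every coordinate i ∈ {1,...,d}: if t ∈ T is the unique corner with x ∈ C^d(t) and t' ∈ T is the unique corner with x + e_i ∈ C^d(t'), then t_i + 1 = t'_i. -/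
/-- In a cube tiling, if `t` is the corner of the cube containing the integer
point `x` and `t'` that of the cube containing `x + e_i`, then `t i + 1 = t' i`. -/
theorem tiling_shift_coord (d : ℕ) (T : Set (Fin d → ℝ)) (hT : IsTiling d T)
    (x : Fin d → ℤ) (i : Fin d) (t t' : Fin d → ℝ)
    (ht : t ∈ T) (hxt : (fun j => (x j : ℝ)) ∈ cube d t)
    (ht' : t' ∈ T) (hxt' : ((fun j => (x j : ℝ)) + stdBasis d i) ∈ cube d t') :
    t i + 1 = t' i := by
  obtain ⟨hdisj, hcov⟩ := hT
  have key : ∀ s s' : Fin d → ℝ, s ∈ T → s' ∈ T → ∀ p : Fin d → ℝ,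
      p ∈ cube d s → p ∈ cube d s' → s = s' := by
    intro s s' hs hs' p hp hp'
    by_contra h
    exact Set.disjoint_left.mp (hdisj hs hs' h) hp hp'
  have h1 := hxt i
  have h2 := hxt' i
  simp only [Pi.add_apply, stdBasis, if_pos rfl, if_true] at h2
  rcases lt_trichotomy (t' i) (t i + 1) with hlt | heq | hgt
  · -- p with p i = t' i is in both cubes
    exfalso
    set p : Fin d → ℝ := fun j => if j = i then t' i else (x j : ℝ) with hp
    have hpt : p ∈ cube d t := by
      intro j
      by_cases hj : j = i
      · subst hj
        simp only [p, if_pos rfl]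
        constructor
        · linarith [h1.1, h2.2]
        · exact hlt
      · have := hxt j
        simpa [p, hj] using this
    have hpt' : p ∈ cube d t' := by
      intro j
      by_cases hj : j = i
      · subst hj
        simp only [p, if_pos rfl]
        constructor
        · exact le_rfl
        · linarith
      · have := hxt' j
        simpa [p, hj, stdBasis] using this
    have := key t t' ht ht' p hpt hpt'
    have : t i = t' i := by rw [this]
    linarith [h2.2, h1.1]
  · linarith
  · -- p with p i = t i + 1 is covered by some s
    exfalso
    set p : Fin d → ℝ := fun j => if j = i then t i + 1 else (x j : ℝ) with hp
    have hpmem : p ∈ ⋃ s ∈ T, cube d s := by rw [hcov]; trivial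
    obtain ⟨s, hs, hps⟩ := Set.mem_iUnion₂.mp hpmem
    have hsi := hps i
    simp only [p, if_pos rfl] at hsi
    -- hsi : s i ≤ t i + 1 ∧ t i + 1 < s i + 1
    rcases le_or_gt (s i) (x i : ℝ) with hle | hgt'
    · -- x ∈ cube s, so s = t, contradiction
      have hxs : (fun j => (x j : ℝ)) ∈ cube d s := by
        intro j
        by_cases hj : j = i
        · subst hj
          constructor
          · exact hle
          · linarith [h1.2, hsi.2]
        · have := hps j
          simpa [p, hj] using this
      have hst := key s t hs ht _ hxs hxt
      have : s i = t i := by rw [hst]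
      linarith [hsi.2]
    · -- x + e_i ∈ cube s, so s = t', contradiction
      have hxs : ((fun j => (x j : ℝ)) + stdBasis d i) ∈ cube d s := by
        intro j
        by_cases hj : j = i
        · subst hj
          simp only [Pi.add_apply, stdBasis, if_pos rfl, if_true]
          constructor
          · linarith [hsi.1, h1.1]
          · linarith
        · have := hps j
          simpa [p, hj, stdBasis] using this
      have hst := key s t' hs ht' _ hxs hxt'
      have : s i = t' i := by rw [hst]
      linarith [hsi.1]
end

section
/- Let T ⊆ ℝ^d be a cube tiling of ℝ^d. Suppose that for every integer point x ∈ ℤ^d and every coordinate i ∈ {1,...,d}, the cube of T containing x and the cube of T containing x + e_i do not faceshare. Then the tiling is faceshare-free, i.e., no two distinct cubes of the tiling faceshare. -/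
/-- If in a cube tiling, for every integer point `x` and coordinate `i`, the cube
containing `x` and the cube containing `x + e_i` do not faceshare, then the
tiling is faceshare-free. -/
theorem tiling_faceshareFree_of_integer_points (d : ℕ) (T : Set (Fin d → ℝ))
    (hT : IsTiling d T)
    (h : ∀ (x : Fin d → ℤ) (i : Fin d) (t t' : Fin d → ℝ), t ∈ T → t' ∈ T →
      (fun j => (x j : ℝ)) ∈ cube d t →
      ((fun j => (x j : ℝ)) + stdBasis d i) ∈ cube d t' → ¬ Faceshare d t t') :
    FaceshareFree d T := by
  have hmem : ∀ t : Fin d → ℝ, (fun j => ((fun j => ⌈t j⌉) j : ℝ)) ∈ cube d t := by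
    intro t j
    exact ⟨Int.le_ceil _, Int.ceil_lt_add_one _⟩
  have hmem' : ∀ (t : Fin d → ℝ) (i : Fin d),
      ((fun j => ((fun j => ⌈t j⌉) j : ℝ)) + stdBasis d i) ∈ cube d (t + stdBasis d i) := by
    intro t i j
    simp only [Pi.add_apply, stdBasis]
    by_cases hj : j = i <;> simp [hj] <;>
      exact ⟨Int.le_ceil _, Int.ceil_lt_add_one _⟩
  intro t ht t' ht' hne hfs
  obtain ⟨i, hi | hi⟩ := hfs
  · exact h (fun j => ⌈t j⌉) i t t' ht ht' (hmem t) (hi ▸ hmem' t i) ⟨i, Or.inl hi⟩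
  · have ht'' : t = t' + stdBasis d i := by
      rw [hi]; ring
    exact h (fun j => ⌈t' j⌉) i t' t ht' ht (hmem t') (ht'' ▸ hmem' t' i)
      ⟨i, Or.inl ht''⟩
end

section
/- Let T ⊆ ℝ^d be a cube tiling of ℝ^d, fix a, b ∈ ℝ and i ∈ {1,...,d}, and define T' = {t ∈ T : t_i ≢ a (mod 1)} ∪ {t + b·e_i : t ∈ T, t_i ≡ a (mod 1)}. Then T' is a cube tiling of ℝ^d. -/
lemma interval_int (S : Set ℝ)
    (disj : ∀ s ∈ S, ∀ s' ∈ S, ∀ r : ℝ, s ≤ r → r < s + 1 → s' ≤ r → r < s' + 1 → s = s')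
    (cov : ∀ r : ℝ, ∃ s ∈ S, s ≤ r ∧ r < s + 1) :
    ∀ s ∈ S, ∀ s' ∈ S, ∃ z : ℤ, s' - s = (z : ℝ) := by
  have step1 : ∀ s ∈ S, s + 1 ∈ S := by
    intro s hs
    obtain ⟨u, hu, h1, h2⟩ := cov (s + 1)
    have hus : u = s + 1 := by
      by_contra hne
      have hlt : u < s + 1 := lt_of_le_of_ne h1 hne
      have hgt : s < u := by linarith
      have := disj s hs u hu u (le_of_lt hgt) hlt le_rfl (by linarith)
      exact absurd this (ne_of_lt hgt)
    exact hus ▸ hu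
  have step2 : ∀ s ∈ S, s - 1 ∈ S := by
    intro s hs
    obtain ⟨u, hu, h1, h2⟩ := cov (s - 1)
    have hle : u + 1 ≤ s := by
      by_contra hgt
      push_neg at hgt
      have := disj u hu s hs s (by linarith) (by linarith) le_rfl (by linarith)
      linarith
    have hu1 : u + 1 ∈ S := step1 u hu
    have : u + 1 = s := disj (u + 1) hu1 s hs s hle (by linarith) le_rfl (by linarith)
    have heq : s - 1 = u := by linarith
    exact heq ▸ hu
  have stepZ : ∀ z : ℤ, ∀ s ∈ S, s + (z : ℝ) ∈ S := by
    intro z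
    induction z using Int.induction_on with
    | zero => intro s hs; simpa using hs
    | succ n ih =>
        intro s hs
        have h := step1 (s + (n : ℝ)) (ih s hs)
        have : s + ((((n : ℤ) + 1 : ℤ)) : ℝ) = s + (n : ℝ) + 1 := by push_cast; ring
        rw [this]; exact h
    | pred n ih =>
        intro s hs
        have h := step2 (s + (-(n : ℝ))) (by simpa using ih s hs)
        have : s + (((-(n : ℤ) - 1 : ℤ)) : ℝ) = s + (-(n : ℝ)) - 1 := by push_cast; ring
        rw [this]; exact h
  intro s hs s' hs'
  set n := ⌊s' - s⌋ with hn
  have h1 := Int.floor_le (s' - s)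
  have h2 := Int.lt_floor_add_one (s' - s)
  have hsn : s + (n : ℝ) ∈ S := stepZ n s hs
  have : s + (n : ℝ) = s' :=
    disj _ hsn s' hs' s' (by rw [hn] at *; linarith) (by rw [hn] at *; linarith) le_rfl
      (by linarith)
  exact ⟨n, by linarith⟩

lemma column_cong (d : ℕ) (T : Set (Fin d → ℝ)) (hT : IsTiling d T) (i : Fin d)
    (y : Fin d → ℝ) (t t' : Fin d → ℝ) (ht : t ∈ T) (ht' : t' ∈ T)
    (h1 : ∀ j, j ≠ i → t j ≤ y j ∧ y j < t j + 1)
    (h2 : ∀ j, j ≠ i → t' j ≤ y j ∧ y j < t' j + 1) :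
    ∃ z : ℤ, t' i - t i = (z : ℝ) := by
  set S : Set ℝ := {r | ∃ u, u ∈ T ∧ (∀ j, j ≠ i → u j ≤ y j ∧ y j < u j + 1) ∧ u i = r}
    with hS
  have disj : ∀ s ∈ S, ∀ s' ∈ S, ∀ r : ℝ, s ≤ r → r < s + 1 → s' ≤ r → r < s' + 1 → s = s' := by
    rintro s ⟨u, hu, hoth, rfl⟩ s' ⟨u', hu', hoth', rfl⟩ r hr1 hr2 hr3 hr4
    by_cases huu : u = u'
    · rw [huu]
    · exfalso
      have hp : Function.update y i r ∈ cube d u := by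
        intro j
        by_cases hj : j = i
        · subst hj; simpa using ⟨hr1, hr2⟩
        · rw [Function.update_of_ne hj]; exact hoth j hj
      have hp' : Function.update y i r ∈ cube d u' := by
        intro j
        by_cases hj : j = i
        · subst hj; simpa using ⟨hr3, hr4⟩
        · rw [Function.update_of_ne hj]; exact hoth' j hj
      exact Set.disjoint_left.mp (hT.1 hu hu' huu) hp hp'
  have cov : ∀ r : ℝ, ∃ s ∈ S, s ≤ r ∧ r < s + 1 := by
    intro r
    have hmem : Function.update y i r ∈ ⋃ t ∈ T, cube d t := by
      rw [hT.2]; trivial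
    obtain ⟨u, hu, hcu⟩ := Set.mem_iUnion₂.mp hmem
    refine ⟨u i, ⟨u, hu, ?_, rfl⟩, ?_⟩
    · intro j hj
      have := hcu j
      rwa [Function.update_of_ne hj] at this
    · have := hcu i
      rwa [Function.update_self] at this
  exact interval_int S disj cov (t i) ⟨t, ht, h1, rfl⟩ (t' i) ⟨t', ht', h2, rfl⟩

/-- Replacement lemma (tiling part): shifting by `b` in coordinate `i` all corners
whose `i`-th coordinate is `≡ a (mod 1)` again yields a cube tiling. -/
theorem replacement_tiling (d : ℕ) (T : Set (Fin d → ℝ)) (hT : IsTiling d T)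
    (a b : ℝ) (i : Fin d) :
    IsTiling d
      ({t | t ∈ T ∧ ¬ ∃ z : ℤ, t i - a = (z : ℝ)} ∪
       {t' | ∃ t, t ∈ T ∧ (∃ z : ℤ, t i - a = (z : ℝ)) ∧ t' = t + b • stdBasis d i}) := by
  have shift_apply : ∀ (t : Fin d → ℝ) (j : Fin d),
      (t + b • stdBasis d i) j = t j + (if j = i then b else 0) := by
    intro t j
    by_cases hj : j = i <;> simp [stdBasis, hj]
  constructor
  · rintro u hu v hv huv
    rw [Set.disjoint_left]
    intro y hyu hyv
    rcases hu with ⟨huT, hua⟩ | ⟨s, hsT, hsa, rfl⟩ <;>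
      rcases hv with ⟨hvT, hva⟩ | ⟨s', hs'T, hs'a, rfl⟩
    · exact Set.disjoint_left.mp (hT.1 huT hvT huv) hyu hyv
    · -- u plain, v = s' + b e
      have oth_u : ∀ j, j ≠ i → u j ≤ y j ∧ y j < u j + 1 := fun j _ => hyu j
      have oth_s' : ∀ j, j ≠ i → s' j ≤ y j ∧ y j < s' j + 1 := by
        intro j hj
        have := hyv j
        rwa [shift_apply, if_neg hj, add_zero] at this
      obtain ⟨z1, hz1⟩ := column_cong d T hT i y s' u hs'T huT oth_s' oth_u
      obtain ⟨z0, hz0⟩ := hs'a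
      exact hua ⟨z1 + z0, by push_cast; linarith⟩
    · -- u = s + b e, v plain
      have oth_v : ∀ j, j ≠ i → v j ≤ y j ∧ y j < v j + 1 := fun j _ => hyv j
      have oth_s : ∀ j, j ≠ i → s j ≤ y j ∧ y j < s j + 1 := by
        intro j hj
        have := hyu j
        rwa [shift_apply, if_neg hj, add_zero] at this
      obtain ⟨z1, hz1⟩ := column_cong d T hT i y s v hsT hvT oth_s oth_v
      obtain ⟨z0, hz0⟩ := hsa
      exact hva ⟨z1 + z0, by push_cast; linarith⟩
    · -- both shifted
      have hss : s ≠ s' := by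
        intro h; exact huv (by rw [h])
      have hps : Function.update y i (y i - b) ∈ cube d s := by
        intro j
        by_cases hj : j = i
        · rw [hj]
          have := hyu i
          rw [shift_apply, if_pos rfl] at this
          rw [Function.update_self]
          constructor <;> linarith [this.1, this.2]
        · rw [Function.update_of_ne hj]
          have := hyu j
          rwa [shift_apply, if_neg hj, add_zero] at this
      have hps' : Function.update y i (y i - b) ∈ cube d s' := by
        intro j
        by_cases hj : j = i
        · rw [hj]
          have := hyv i
          rw [shift_apply, if_pos rfl] at this
          rw [Function.update_self]
          constructor <;> linarith [this.1, this.2]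
        · rw [Function.update_of_ne hj]
          have := hyv j
          rwa [shift_apply, if_neg hj, add_zero] at this
      exact Set.disjoint_left.mp (hT.1 hsT hs'T hss) hps hps'
  · rw [Set.eq_univ_iff_forall]
    intro y
    have hy : y ∈ ⋃ t ∈ T, cube d t := by rw [hT.2]; trivial
    obtain ⟨t0, ht0, hy0⟩ := Set.mem_iUnion₂.mp hy
    by_cases h : ∃ z : ℤ, t0 i - a = (z : ℝ)
    · have hp : Function.update y i (y i - b) ∈ ⋃ t ∈ T, cube d t := by rw [hT.2]; trivial
      obtain ⟨t, ht, hpt⟩ := Set.mem_iUnion₂.mp hp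
      have oth_t : ∀ j, j ≠ i → t j ≤ y j ∧ y j < t j + 1 := by
        intro j hj
        have := hpt j
        rwa [Function.update_of_ne hj] at this
      have oth_t0 : ∀ j, j ≠ i → t0 j ≤ y j ∧ y j < t0 j + 1 := fun j _ => hy0 j
      obtain ⟨z1, hz1⟩ := column_cong d T hT i y t0 t ht0 ht oth_t0 oth_t
      obtain ⟨z0, hz0⟩ := h
      have ha : ∃ z : ℤ, t i - a = (z : ℝ) := ⟨z1 + z0, by push_cast; linarith⟩
      refine Set.mem_biUnion (Set.mem_union_right _ ⟨t, ht, ha, rfl⟩) ?_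
      intro j
      by_cases hj : j = i
      · rw [hj]
        have := hpt i
        rw [Function.update_self] at this
        rw [shift_apply, if_pos rfl]
        constructor <;> linarith [this.1, this.2]
      · rw [shift_apply, if_neg hj, add_zero]
        exact oth_t j hj
    · exact Set.mem_biUnion (Set.mem_union_left _ ⟨ht0, h⟩) hy0
end

section
/- Let T ⊆ ℝ^d be a faceshare-free cube tiling of ℝ^d, fix a, b ∈ ℝ and i ∈ {1,...,d}, and suppose there exists no t ∈ T with t_i ≡ a + b (mod 1). Define T' = {t ∈ T : t_i ≢ a (mod 1)} ∪ {t + b·e_i : t ∈ T, t_i ≡ a (mod 1)}. Then T' is a faceshare-free cube tiling of ℝ^d. -/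

lemma tiling_unique {d : ℕ} {T : Set (Fin d → ℝ)} (hT : IsTiling d T)
    {t t' y : Fin d → ℝ} (ht : t ∈ T) (ht' : t' ∈ T)
    (hy : y ∈ cube d t) (hy' : y ∈ cube d t') : t = t' := by
  by_contra h
  exact Set.disjoint_left.mp (hT.1 ht ht' h) hy hy'

lemma tiling_exists {d : ℕ} {T : Set (Fin d → ℝ)} (hT : IsTiling d T)
    (y : Fin d → ℝ) : ∃ t ∈ T, y ∈ cube d t := by
  have : y ∈ (⋃ t ∈ T, cube d t) := hT.2 ▸ Set.mem_univ y
  simpa using this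

lemma column_int {d : ℕ} {T : Set (Fin d → ℝ)} (hT : IsTiling d T) (i : Fin d)
    (y : Fin d → ℝ) {t t' : Fin d → ℝ} (ht : t ∈ T) (ht' : t' ∈ T)
    (hc : ∀ j, j ≠ i → t j ≤ y j ∧ y j < t j + 1)
    (hc' : ∀ j, j ≠ i → t' j ≤ y j ∧ y j < t' j + 1) :
    ∃ z : ℤ, t' i - t i = (z : ℝ) := by
  set Col : (Fin d → ℝ) → Prop :=
    fun u => u ∈ T ∧ ∀ j, j ≠ i → u j ≤ y j ∧ y j < u j + 1 with hColdef
  have overlap : ∀ u v, Col u → Col v → u i ≤ v i → v i < u i + 1 → u = v := by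
    intro u v hu hv h1 h2
    refine tiling_unique hT hu.1 hv.1 (y := Function.update y i (v i)) ?_ ?_
    · intro j
      by_cases hj : j = i
      · subst hj; rw [Function.update_self]; exact ⟨h1, h2⟩
      · rw [Function.update_of_ne hj]; exact hu.2 j hj
    · intro j
      by_cases hj : j = i
      · subst hj; rw [Function.update_self]; exact ⟨le_refl _, lt_add_one _⟩
      · rw [Function.update_of_ne hj]; exact hv.2 j hj
  have succ : ∀ u, Col u → ∃ v, Col v ∧ v i = u i + 1 := by
    intro u hu
    obtain ⟨v, hvT, hvy⟩ := tiling_exists hT (Function.update y i (u i + 1))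
    have hvcol : ∀ j, j ≠ i → v j ≤ y j ∧ y j < v j + 1 := by
      intro j hj; have := hvy j; rwa [Function.update_of_ne hj] at this
    have hvi := hvy i
    rw [Function.update_self] at hvi
    refine ⟨v, ⟨hvT, hvcol⟩, ?_⟩
    rcases lt_or_eq_of_le hvi.1 with hlt | heq
    · exfalso
      have hui : u i < v i := by linarith [hvi.2]
      have := overlap u v hu ⟨hvT, hvcol⟩ (le_of_lt hui) hlt
      rw [this] at hui; exact lt_irrefl _ hui
    · exact heq
  have main : ∀ n : ℕ, ∀ u v, Col u → Col v → u i ≤ v i → v i - u i ≤ (n : ℝ) →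
      ∃ z : ℤ, v i - u i = (z : ℝ) := by
    intro n
    induction n with
    | zero =>
      intro u v hu hv h1 h2
      exact ⟨0, by push_cast; push_cast at h2; linarith⟩
    | succ n ih =>
      intro u v hu hv h1 h2
      by_cases hlt : v i < u i + 1
      · have := overlap u v hu hv h1 hlt
        exact ⟨0, by rw [this]; push_cast; ring⟩
      · push_neg at hlt
        obtain ⟨w, hw, hwi⟩ := succ u hu
        obtain ⟨z, hz⟩ := ih w v hw hv (by rw [hwi]; exact hlt)
          (by rw [hwi]; push_cast at h2 ⊢; linarith)
        refine ⟨z + 1, ?_⟩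
        rw [hwi] at hz; push_cast; linarith
  rcases le_total (t i) (t' i) with h | h
  · exact main ⌈t' i - t i⌉₊ t t' ⟨ht, hc⟩ ⟨ht', hc'⟩ h (Nat.le_ceil _)
  · obtain ⟨z, hz⟩ := main ⌈t i - t' i⌉₊ t' t ⟨ht', hc'⟩ ⟨ht, hc⟩ h (Nat.le_ceil _)
    exact ⟨-z, by push_cast; linarith⟩

lemma shift_apply {d : ℕ} (b : ℝ) (i j : Fin d) (t : Fin d → ℝ) :
    (t + b • stdBasis d i) j = if j = i then t j + b else t j := by
  simp only [Pi.add_apply, Pi.smul_apply, stdBasis, smul_eq_mul]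
  split_ifs <;> ring

lemma std_int {d : ℕ} (i j : Fin d) : ∃ m : ℤ, stdBasis d j i = (m : ℝ) := by
  unfold stdBasis
  split_ifs
  · exact ⟨1, by norm_num⟩
  · exact ⟨0, by norm_num⟩

/-- Replacement lemma: shifting by `b` in coordinate `i` all corners whose `i`-th
coordinate is `≡ a (mod 1)` yields a cube tiling; moreover if the original tiling
is faceshare-free and no `t ∈ T` has `t i ≡ a + b (mod 1)`, the new tiling is
faceshare-free as well. -/
theorem replacement_faceshareFree (d : ℕ) (T : Set (Fin d → ℝ)) (hT : IsTiling d T)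
    (hff : FaceshareFree d T) (a b : ℝ) (i : Fin d)
    (hab : ¬ ∃ t ∈ T, ∃ z : ℤ, t i - (a + b) = (z : ℝ)) :
    IsTiling d
      ({t | t ∈ T ∧ ¬ ∃ z : ℤ, t i - a = (z : ℝ)} ∪
       {t' | ∃ t, t ∈ T ∧ (∃ z : ℤ, t i - a = (z : ℝ)) ∧ t' = t + b • stdBasis d i}) ∧
    FaceshareFree d
      ({t | t ∈ T ∧ ¬ ∃ z : ℤ, t i - a = (z : ℝ)} ∪
       {t' | ∃ t, t ∈ T ∧ (∃ z : ℤ, t i - a = (z : ℝ)) ∧ t' = t + b • stdBasis d i}) := by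
  push_neg at hab
  -- membership of a shifted cube
  have shift_mem : ∀ (s y : Fin d → ℝ), y ∈ cube d (s + b • stdBasis d i) ↔
      ((∀ j, j ≠ i → s j ≤ y j ∧ y j < s j + 1) ∧ (s i + b ≤ y i ∧ y i < s i + b + 1)) := by
    intro s y
    constructor
    · intro hy
      refine ⟨fun j hj => ?_, ?_⟩
      · have := hy j; rwa [shift_apply, if_neg hj] at this
      · have := hy i; rwa [shift_apply, if_pos rfl] at this
    · intro ⟨h1, h2⟩ j
      rw [shift_apply]
      by_cases hj : j = i
      · subst hj; rw [if_pos rfl]; exact h2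
      · rw [if_neg hj]; exact h1 j hj
  -- mixed overlap is impossible
  have mixed : ∀ t₁, t₁ ∈ T → (¬ ∃ z : ℤ, t₁ i - a = (z : ℝ)) →
      ∀ s, s ∈ T → (∃ z : ℤ, s i - a = (z : ℝ)) →
      ∀ y, y ∈ cube d t₁ → y ∈ cube d (s + b • stdBasis d i) → False := by
    intro t₁ ht₁ hna s hs ⟨z, hz⟩ y hy1 hy2
    obtain ⟨z', hz'⟩ := column_int hT i y ht₁ hs (fun j _ => hy1 j)
      (fun j hj => ((shift_mem s y).mp hy2).1 j hj)
    exact hna ⟨z - z', by push_cast; linarith⟩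
  constructor
  · constructor
    · -- pairwise disjoint
      intro t₁ h₁ t₂ h₂ hne
      rw [Set.disjoint_left]
      intro y hy1 hy2
      rcases h₁ with h₁ | h₁ <;> rcases h₂ with h₂ | h₂
      · exact Set.disjoint_left.mp (hT.1 h₁.1 h₂.1 hne) hy1 hy2
      · obtain ⟨s, hs, hsz, rfl⟩ := h₂
        exact mixed t₁ h₁.1 h₁.2 s hs hsz y hy1 hy2
      · obtain ⟨s, hs, hsz, rfl⟩ := h₁
        exact mixed t₂ h₂.1 h₂.2 s hs hsz y hy2 hy1
      · obtain ⟨s₁, hs₁, hsz₁, rfl⟩ := h₁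
        obtain ⟨s₂, hs₂, hsz₂, rfl⟩ := h₂
        have hsne : s₁ ≠ s₂ := fun h => hne (by rw [h])
        set p := Function.update y i (y i - b) with hp
        have hmem : ∀ s : Fin d → ℝ, y ∈ cube d (s + b • stdBasis d i) → p ∈ cube d s := by
          intro s hy j
          by_cases hj : j = i
          · subst hj
            rw [hp, Function.update_self]
            have := ((shift_mem s y).mp hy).2
            constructor <;> linarith [this.1, this.2]
          · rw [hp, Function.update_of_ne hj]
            exact ((shift_mem s y).mp hy).1 j hj
        exact hsne (tiling_unique hT hs₁ hs₂ (hmem s₁ hy1) (hmem s₂ hy2))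
    · -- covering
      rw [Set.eq_univ_iff_forall]
      intro y
      simp only [Set.mem_iUnion, exists_prop]
      obtain ⟨t₀, ht₀, hy₀⟩ := tiling_exists hT y
      by_cases h : ∃ z : ℤ, t₀ i - a = (z : ℝ)
      · -- shifted column
        obtain ⟨u, hu, hpu⟩ := tiling_exists hT (Function.update y i (y i - b))
        have hucol : ∀ j, j ≠ i → u j ≤ y j ∧ y j < u j + 1 := by
          intro j hj; have := hpu j; rwa [Function.update_of_ne hj] at this
        obtain ⟨z', hz'⟩ := column_int hT i y ht₀ hu (fun j _ => hy₀ j) hucol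
        obtain ⟨z, hz⟩ := h
        refine ⟨u + b • stdBasis d i, Or.inr ⟨u, hu, ⟨z + z', by push_cast; linarith⟩, rfl⟩, ?_⟩
        rw [shift_mem]
        have := hpu i
        rw [Function.update_self] at this
        exact ⟨hucol, by constructor <;> linarith [this.1, this.2]⟩
      · exact ⟨t₀, Or.inl ⟨ht₀, h⟩, hy₀⟩
  · -- faceshare-free
    intro t₁ h₁ t₂ h₂ hne ⟨j, hj⟩
    obtain ⟨m, hm⟩ := std_int i j
    rcases h₁ with h₁ | h₁ <;> rcases h₂ with h₂ | h₂
    · exact hff t₁ h₁.1 t₂ h₂.1 hne ⟨j, hj⟩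
    · -- t₁ unshifted, t₂ shifted : t₁ i ≡ a + b mod 1, contradiction with hab
      obtain ⟨s, hs, ⟨z, hz⟩, rfl⟩ := h₂
      have hi : (s + b • stdBasis d i) i = s i + b := by rw [shift_apply, if_pos rfl]
      rcases hj with hj | hj
      · have := congrFun hj i
        rw [hi, Pi.add_apply, hm] at this
        exact hab t₁ h₁.1 (z - m) (by push_cast; linarith)
      · have := congrFun hj i
        rw [hi, Pi.sub_apply, hm] at this
        exact hab t₁ h₁.1 (z + m) (by push_cast; linarith)
    · -- t₁ shifted, t₂ unshifted
      obtain ⟨s, hs, ⟨z, hz⟩, rfl⟩ := h₁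
      have hi : (s + b • stdBasis d i) i = s i + b := by rw [shift_apply, if_pos rfl]
      rcases hj with hj | hj
      · have := congrFun hj i
        rw [Pi.add_apply, hi, hm] at this
        exact hab t₂ h₂.1 (z + m) (by push_cast; linarith)
      · have := congrFun hj i
        rw [Pi.sub_apply, hi, hm] at this
        exact hab t₂ h₂.1 (z - m) (by push_cast; linarith)
    · -- both shifted
      obtain ⟨s₁, hs₁, hsz₁, rfl⟩ := h₁
      obtain ⟨s₂, hs₂, hsz₂, rfl⟩ := h₂
      have hsne : s₁ ≠ s₂ := fun h => hne (by rw [h])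
      refine hff s₁ hs₁ s₂ hs₂ hsne ⟨j, ?_⟩
      rcases hj with hj | hj
      · left
        have : s₂ + b • stdBasis d i = s₁ + stdBasis d j + b • stdBasis d i := by
          rw [hj]; ring
        exact add_right_cancel this
      · right
        have : s₂ + b • stdBasis d i = s₁ - stdBasis d j + b • stdBasis d i := by
          rw [hj]; ring
        exact add_right_cancel this
end

section
/- For every d ≥ 1: if there exists a faceshare-free cube tiling of ℝ^d, then there exists a periodic faceshare-free cube tiling of ℝ^d. Equivalently, if Keller's conjecture holds for all periodic tilings of ℝ^d, then it holds for all tilings of ℝ^d. -/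
namespace KP

def cube' {ι : Type} (x : ι → ℝ) : Set (ι → ℝ) := {y | ∀ i, x i ≤ y i ∧ y i < x i + 1}

def Tiling' {ι : Type} (T : Set (ι → ℝ)) : Prop :=
  ∀ y : ι → ℝ, ∃! t : ι → ℝ, t ∈ T ∧ y ∈ cube' t

variable {ι : Type}

noncomputable def corner {T : Set (ι → ℝ)} (hT : Tiling' T) (y : ι → ℝ) : ι → ℝ :=
  (hT y).choose

lemma corner_mem {T : Set (ι → ℝ)} (hT : Tiling' T) (y : ι → ℝ) : corner hT y ∈ T :=
  (hT y).choose_spec.1.1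

lemma mem_corner {T : Set (ι → ℝ)} (hT : Tiling' T) (y : ι → ℝ) : y ∈ cube' (corner hT y) :=
  (hT y).choose_spec.1.2

lemma eq_corner {T : Set (ι → ℝ)} (hT : Tiling' T) {y t : ι → ℝ} (ht : t ∈ T)
    (hy : y ∈ cube' t) : t = corner hT y :=
  (hT y).choose_spec.2 t ⟨ht, hy⟩

def pt (ε : ι → Bool) : ι → ℝ := fun i => if ε i then 1 else 0

lemma pt_bounds (ε : ι → Bool) (i : ι) : 0 ≤ pt ε i ∧ pt ε i ≤ 1 := by
  unfold pt; split <;> norm_num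

lemma self_mem_cube' (x : ι → ℝ) : x ∈ cube' x := fun _ => ⟨le_refl _, lt_add_one _⟩

def EngineStmt (ι : Type) : Prop :=
  ∀ (T : Set (ι → ℝ)) (hT : Tiling' T),
    (∀ (ε δ : ι → Bool) (w : ι → ℤ) (y : ι → ℝ),
        y ∈ cube' (corner hT (pt ε)) →
        (fun i => y i - 2 * (w i : ℝ)) ∈ cube' (corner hT (pt δ)) →
        ε = δ ∧ w = 0) ∧
    (∀ y : ι → ℝ, ∃ (ε : ι → Bool) (z : ι → ℤ),
        (fun i => y i - 2 * (z i : ℝ)) ∈ cube' (corner hT (pt ε)))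

section SliceSec

variable [DecidableEq ι]

def res (i₀ : ι) (y : ι → ℝ) : {j : ι // j ≠ i₀} → ℝ := fun j => y j.1

def emb (i₀ : ι) (h : ℝ) (y' : {j : ι // j ≠ i₀} → ℝ) : ι → ℝ :=
  fun i => if hi : i = i₀ then h else y' ⟨i, hi⟩

def resB (i₀ : ι) (ε : ι → Bool) : {j : ι // j ≠ i₀} → Bool := fun j => ε j.1

def extB (i₀ : ι) (b : Bool) (α : {j : ι // j ≠ i₀} → Bool) : ι → Bool :=
  fun i => if hi : i = i₀ then b else α ⟨i, hi⟩

def extZ (i₀ : ι) (k : ℤ) (z : {j : ι // j ≠ i₀} → ℤ) : ι → ℤ :=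
  fun i => if hi : i = i₀ then k else z ⟨i, hi⟩

lemma emb_self (i₀ : ι) (h : ℝ) (y' : {j : ι // j ≠ i₀} → ℝ) : emb i₀ h y' i₀ = h :=
  dif_pos rfl

lemma emb_ne (i₀ : ι) (h : ℝ) (y' : {j : ι // j ≠ i₀} → ℝ) (j : {j : ι // j ≠ i₀}) :
    emb i₀ h y' j.1 = y' j := dif_neg j.2

def Slice (i₀ : ι) (T : Set (ι → ℝ)) (h : ℝ) : Set ({j : ι // j ≠ i₀} → ℝ) :=
  {r | ∃ t, t ∈ T ∧ t i₀ ≤ h ∧ h < t i₀ + 1 ∧ r = res i₀ t}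

lemma res_mem_slice {i₀ : ι} {T : Set (ι → ℝ)} {t : ι → ℝ} (ht : t ∈ T) {h : ℝ}
    (h1 : t i₀ ≤ h) (h2 : h < t i₀ + 1) : res i₀ t ∈ Slice i₀ T h :=
  ⟨t, ht, h1, h2, rfl⟩

lemma emb_mem_cube' {i₀ : ι} {t : ι → ℝ} {h : ℝ} {y' : {j : ι // j ≠ i₀} → ℝ}
    (h1 : t i₀ ≤ h) (h2 : h < t i₀ + 1) (hy : y' ∈ cube' (res i₀ t)) :
    emb i₀ h y' ∈ cube' t := by
  intro i
  by_cases hi : i = i₀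
  · subst hi; rw [emb_self]; exact ⟨h1, h2⟩
  · have := hy ⟨i, hi⟩
    rw [show emb i₀ h y' i = y' ⟨i, hi⟩ from dif_neg hi]
    exact this

lemma slice_tiling {T : Set (ι → ℝ)} (hT : Tiling' T) (i₀ : ι) (h : ℝ) :
    Tiling' (Slice i₀ T h) := by
  intro y'
  have htm := corner_mem hT (emb i₀ h y')
  have hcm := mem_corner hT (emb i₀ h y')
  set t := corner hT (emb i₀ h y') with ht_def
  have h1 : t i₀ ≤ h := by have := (hcm i₀).1; rwa [emb_self] at this
  have h2 : h < t i₀ + 1 := by have := (hcm i₀).2; rwa [emb_self] at this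
  refine ⟨res i₀ t, ⟨res_mem_slice htm h1 h2, ?_⟩, ?_⟩
  · intro j
    have := hcm j.1
    rwa [emb_ne] at this
  · rintro r ⟨⟨s, hs, hs1, hs2, rfl⟩, hyr⟩
    have hmem : emb i₀ h y' ∈ cube' s := emb_mem_cube' hs1 hs2 hyr
    rw [eq_corner hT hs hmem]

lemma res_inj {i₀ : ι} {T : Set (ι → ℝ)} (hT : Tiling' T) {t₁ t₂ : ι → ℝ}
    (m₁ : t₁ ∈ T) (m₂ : t₂ ∈ T) {h : ℝ}
    (a₁ : t₁ i₀ ≤ h) (b₁ : h < t₁ i₀ + 1) (a₂ : t₂ i₀ ≤ h) (b₂ : h < t₂ i₀ + 1)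
    (hres : res i₀ t₁ = res i₀ t₂) : t₁ = t₂ := by
  have mm1 : emb i₀ h (res i₀ t₁) ∈ cube' t₁ := emb_mem_cube' a₁ b₁ (self_mem_cube' _)
  have mm2 : emb i₀ h (res i₀ t₁) ∈ cube' t₂ := by
    refine emb_mem_cube' a₂ b₂ ?_
    rw [hres]; exact self_mem_cube' _
  rw [eq_corner hT m₁ mm1, eq_corner hT m₂ mm2]

/-- `r` is the cube of `T` that, in the slice of `T` at height `h` in coordinate
`i₀`, is a vertex cube and covers `y'` modulo `2ℤ`. -/
def Cov (i₀ : ι) (T : Set (ι → ℝ)) (y' : {j : ι // j ≠ i₀} → ℝ) (h : ℝ) (r : ι → ℝ) : Prop :=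
  r ∈ T ∧ r i₀ ≤ h ∧ h < r i₀ + 1 ∧
    (∃ α : {j : ι // j ≠ i₀} → Bool, pt α ∈ cube' (res i₀ r)) ∧
    (∃ z' : {j : ι // j ≠ i₀} → ℤ,
      (fun j => y' j - 2 * (z' j : ℝ)) ∈ cube' (res i₀ r))

lemma cov_exists {i₀ : ι} {T : Set (ι → ℝ)} (hT : Tiling' T)
    (IH : EngineStmt {j : ι // j ≠ i₀}) (y' : {j : ι // j ≠ i₀} → ℝ) (h : ℝ) :
    ∃ r, Cov i₀ T y' h r := by
  obtain ⟨α, z', hz⟩ := (IH _ (slice_tiling hT i₀ h)).2 y'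
  have hv := corner_mem (slice_tiling hT i₀ h) (pt α)
  obtain ⟨t, htm, h1, h2, hres⟩ := hv
  refine ⟨t, htm, h1, h2, ⟨α, ?_⟩, ⟨z', ?_⟩⟩
  · rw [← hres]; exact mem_corner _ _
  · rw [← hres]; exact hz

lemma cov_unique {i₀ : ι} {T : Set (ι → ℝ)} (hT : Tiling' T)
    (IH : EngineStmt {j : ι // j ≠ i₀}) {y' : {j : ι // j ≠ i₀} → ℝ} {h : ℝ}
    {r₁ r₂ : ι → ℝ} (c₁ : Cov i₀ T y' h r₁) (c₂ : Cov i₀ T y' h r₂) : r₁ = r₂ := by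
  obtain ⟨m₁, a₁, b₁, ⟨α₁, hα₁⟩, ⟨z₁, hz₁⟩⟩ := c₁
  obtain ⟨m₂, a₂, b₂, ⟨α₂, hα₂⟩, ⟨z₂, hz₂⟩⟩ := c₂
  have ST := slice_tiling hT i₀ h
  have e₁ : res i₀ r₁ = corner ST (pt α₁) := eq_corner ST (res_mem_slice m₁ a₁ b₁) hα₁
  have e₂ : res i₀ r₂ = corner ST (pt α₂) := eq_corner ST (res_mem_slice m₂ a₂ b₂) hα₂
  have mem1 : (fun j => y' j - 2 * (z₁ j : ℝ)) ∈ cube' (corner ST (pt α₁)) := by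
    rw [← e₁]; exact hz₁
  have mem2 : (fun j => (y' j - 2 * (z₁ j : ℝ)) - 2 * ((z₂ j - z₁ j : ℤ) : ℝ)) ∈
      cube' (corner ST (pt α₂)) := by
    have hfun : (fun j => (y' j - 2 * (z₁ j : ℝ)) - 2 * ((z₂ j - z₁ j : ℤ) : ℝ)) =
        fun j => y' j - 2 * (z₂ j : ℝ) := by
      funext j; push_cast; ring
    rw [hfun, ← e₂]; exact hz₂
  obtain ⟨hα, hw⟩ := (IH _ ST).1 α₁ α₂ (fun j => z₂ j - z₁ j) _ mem1 mem2
  have : res i₀ r₁ = res i₀ r₂ := by rw [e₁, e₂, hα]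
  exact res_inj hT m₁ m₂ a₁ b₁ a₂ b₂ this

lemma cov_mono {i₀ : ι} {T : Set (ι → ℝ)} {y' : {j : ι // j ≠ i₀} → ℝ} {h h₂ : ℝ}
    {r : ι → ℝ} (c : Cov i₀ T y' h r) (hle : h ≤ h₂) (hlt : h₂ < r i₀ + 1) :
    Cov i₀ T y' h₂ r :=
  ⟨c.1, c.2.1.trans hle, hlt, c.2.2.2⟩

lemma cov_jump {i₀ : ι} {T : Set (ι → ℝ)} (hT : Tiling' T)
    (IH : EngineStmt {j : ι // j ≠ i₀}) {y' : {j : ι // j ≠ i₀} → ℝ} {h : ℝ}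
    {r₀ r' : ι → ℝ} (c₀ : Cov i₀ T y' h r₀) (c' : Cov i₀ T y' (r₀ i₀ + 1) r') :
    r' i₀ = r₀ i₀ + 1 := by
  by_contra hne
  have hlt : r' i₀ < r₀ i₀ + 1 := lt_of_le_of_ne c'.2.1 hne
  have hh : h < r₀ i₀ + 1 := c₀.2.2.1
  have cA : Cov i₀ T y' (max h (r' i₀)) r₀ := cov_mono c₀ (le_max_left _ _) (max_lt hh hlt)
  have cB : Cov i₀ T y' (max h (r' i₀)) r' :=
    ⟨c'.1, le_max_right _ _, max_lt (hh.trans c'.2.2.1) (lt_add_one _), c'.2.2.2.1, c'.2.2.2.2⟩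
  have := cov_unique hT IH cA cB
  subst this
  exact absurd c'.2.2.1 (lt_irrefl _)

lemma walk {i₀ : ι} {T : Set (ι → ℝ)} (hT : Tiling' T)
    (IH : EngineStmt {j : ι // j ≠ i₀}) {y' : {j : ι // j ≠ i₀} → ℝ}
    {r₀ r₁ : ι → ℝ} (c₀ : Cov i₀ T y' 0 r₀) (c₁ : Cov i₀ T y' 1 r₁) :
    r₁ i₀ = r₀ i₀ + 1 := by
  obtain ⟨r', c'⟩ := cov_exists hT IH y' (r₀ i₀ + 1)
  have hr' : r' i₀ = r₀ i₀ + 1 := cov_jump hT IH c₀ c'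
  have ha : r₀ i₀ ≤ 0 := c₀.2.1
  rcases eq_or_lt_of_le (show r₀ i₀ + 1 ≤ 1 by linarith) with heq | hlt
  · have : r' = r₁ := cov_unique hT IH (heq ▸ c') c₁
    rw [← this, hr']
  · have c'' : Cov i₀ T y' 1 r' := cov_mono c' hlt.le (by rw [hr']; linarith [c₀.2.2.1])
    have : r' = r₁ := cov_unique hT IH c'' c₁
    rw [← this, hr']

/-- The core of the disjointness argument: two vertex cubes at vertices that
differ in coordinate `i₀` cannot overlap modulo `2ℤ^d`. -/
lemma key {i₀ : ι} {T : Set (ι → ℝ)} (hT : Tiling' T)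
    (IH : EngineStmt {j : ι // j ≠ i₀}) {ε δ : ι → Bool} {w : ι → ℤ} {y : ι → ℝ}
    (hε : ε i₀ = false) (hδ : δ i₀ = true)
    (h1 : y ∈ cube' (corner hT (pt ε)))
    (h2 : (fun i => y i - 2 * (w i : ℝ)) ∈ cube' (corner hT (pt δ))) : False := by
  set A := corner hT (pt ε) with hA
  set B := corner hT (pt δ) with hB
  have mA := mem_corner hT (pt ε)
  have mB := mem_corner hT (pt δ)
  have aA : A i₀ ≤ 0 := by have := (mA i₀).1; rwa [show pt ε i₀ = 0 by simp [pt, hε]] at this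
  have bA : 0 < A i₀ + 1 := by have := (mA i₀).2; rwa [show pt ε i₀ = 0 by simp [pt, hε]] at this
  have aB : B i₀ ≤ 1 := by have := (mB i₀).1; rwa [show pt δ i₀ = 1 by simp [pt, hδ]] at this
  have bB : 1 < B i₀ + 1 := by have := (mB i₀).2; rwa [show pt δ i₀ = 1 by simp [pt, hδ]] at this
  have cA : Cov i₀ T (res i₀ y) 0 A := by
    refine ⟨corner_mem hT (pt ε), aA, bA, ⟨resB i₀ ε, fun j => mA j.1⟩,
      ⟨fun _ => 0, fun j => ?_⟩⟩
    have := h1 j.1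
    constructor
    · simpa [res] using this.1
    · simpa [res] using this.2
  have cB : Cov i₀ T (res i₀ y) 1 B := by
    refine ⟨corner_mem hT (pt δ), aB, bB, ⟨resB i₀ δ, fun j => mB j.1⟩,
      ⟨fun j => w j.1, fun j => h2 j.1⟩⟩
  have hBA : B i₀ = A i₀ + 1 := walk hT IH cA cB
  have e1 := h1 i₀
  have e2 := h2 i₀
  simp only at e1 e2
  have hw1 : (w i₀ : ℝ) < 0 := by
    have := e2.1
    rw [hBA] at this
    nlinarith [e1.2]
  have hw2 : (-1 : ℝ) < (w i₀ : ℝ) := by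
    have := e2.2
    rw [hBA] at this
    nlinarith [e1.1]
  have q1 : w i₀ < 0 := by exact_mod_cast hw1
  have q2 : (-1 : ℤ) < w i₀ := by exact_mod_cast hw2
  omega

end SliceSec

theorem engine : ∀ (n : ℕ) (ι : Type) [Fintype ι] [DecidableEq ι],
    Fintype.card ι = n → EngineStmt ι := by
  intro n
  induction n with
  | zero =>
    intro ι _ _ hcard
    haveI := Fintype.card_eq_zero_iff.mp hcard
    intro T hT
    constructor
    · intro ε δ w y _ _
      exact ⟨funext fun i => isEmptyElim i, funext fun i => isEmptyElim i⟩
    · intro y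
      exact ⟨fun _ => false, fun _ => 0, fun i => isEmptyElim i⟩
  | succ n IHn =>
    intro ι _ _ hcard T hT
    have IH : ∀ i₀ : ι, EngineStmt {j : ι // j ≠ i₀} := by
      intro i₀
      have h1 : Fintype.card {j : ι // j = i₀} = 1 := Fintype.card_subtype_eq i₀
      have h2 := Fintype.card_subtype_compl (fun j : ι => j = i₀)
      rw [h1, hcard] at h2
      have hc : Fintype.card {j : ι // ¬ j = i₀} = n := by omega
      exact IHn _ hc
    constructor
    · -- disjointness
      intro ε δ w y h1 h2
      by_cases hεδ : ε = δ
      · subst hεδ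
        refine ⟨rfl, funext fun i => ?_⟩
        have e1 := h1 i
        have e2 := h2 i
        simp only at e1 e2
        have q1 : (2 : ℝ) * (w i : ℝ) < 1 := by linarith [e1.1, e2.2]
        have q2 : (-1 : ℝ) < 2 * (w i : ℝ) := by linarith [e1.2, e2.1]
        have q1' : 2 * w i < 1 := by exact_mod_cast q1
        have q2' : (-1 : ℤ) < 2 * w i := by exact_mod_cast q2
        have : w i = 0 := by omega
        simpa using this
      · exfalso
        obtain ⟨i₀, hi₀⟩ := Function.ne_iff.mp hεδ
        rcases Bool.eq_false_or_eq_true (ε i₀) with hε | hε <;>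
          rcases Bool.eq_false_or_eq_true (δ i₀) with hδ | hδ
        · exact hi₀ (hε.trans hδ.symm)
        · -- swap the roles of ε and δ
          refine key (w := -w) hT (IH i₀) hδ hε h2 ?_
          have hfun : (fun i => (y i - 2 * (w i : ℝ)) - 2 * (((-w) i : ℤ) : ℝ)) = y := by
            funext i; simp only [Pi.neg_apply]; push_cast; ring
          rw [hfun]; exact h1
        · exact key hT (IH i₀) hε hδ h1 h2
        · exact hi₀ (hε.trans hδ.symm)
    · -- covering
      intro y
      have hne : Nonempty ι := Fintype.card_pos_iff.mp (by omega)
      obtain ⟨i₀⟩ := hne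
      obtain ⟨r₀, c₀⟩ := cov_exists hT (IH i₀) (res i₀ y) 0
      obtain ⟨r₁, c₁⟩ := cov_exists hT (IH i₀) (res i₀ y) 1
      have h10 : r₁ i₀ = r₀ i₀ + 1 := walk hT (IH i₀) c₀ c₁
      obtain ⟨m₀, a₀, b₀, ⟨α₀, hα₀⟩, ⟨z₀, hz₀⟩⟩ := c₀
      obtain ⟨m₁, a₁, b₁, ⟨α₁, hα₁⟩, ⟨z₁, hz₁⟩⟩ := c₁
      have hr₀ : r₀ = corner hT (pt (extB i₀ false α₀)) := by
        apply eq_corner hT m₀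
        intro i
        by_cases hi : i = i₀
        · subst hi
          rw [show pt (extB i false α₀) i = 0 by simp [pt, extB]]
          exact ⟨a₀, b₀⟩
        · have := hα₀ ⟨i, hi⟩
          rwa [show pt (extB i₀ false α₀) i = pt α₀ ⟨i, hi⟩ by simp [pt, extB, hi]]
      have hr₁ : r₁ = corner hT (pt (extB i₀ true α₁)) := by
        apply eq_corner hT m₁
        intro i
        by_cases hi : i = i₀
        · subst hi
          rw [show pt (extB i true α₁) i = 1 by simp [pt, extB]]
          exact ⟨a₁, b₁⟩
        · have := hα₁ ⟨i, hi⟩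
          rwa [show pt (extB i₀ true α₁) i = pt α₁ ⟨i, hi⟩ by simp [pt, extB, hi]]
      set a := r₀ i₀ with ha_def
      set k : ℤ := ⌊(y i₀ - a) / 2⌋ with hk_def
      have k1 : (k : ℝ) ≤ (y i₀ - a) / 2 := Int.floor_le _
      have k2 : (y i₀ - a) / 2 < k + 1 := Int.lt_floor_add_one _
      by_cases hcase : y i₀ - 2 * (k : ℝ) < a + 1
      · refine ⟨extB i₀ false α₀, extZ i₀ k z₀, ?_⟩
        rw [← hr₀]
        intro i
        by_cases hi : i = i₀
        · subst hi
          have e : extZ i k z₀ i = k := dif_pos rfl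
          simp only [e]
          constructor
          · linarith
          · linarith
        · have e : extZ i₀ k z₀ i = z₀ ⟨i, hi⟩ := dif_neg hi
          simp only [e]
          exact hz₀ ⟨i, hi⟩
      · push_neg at hcase
        refine ⟨extB i₀ true α₁, extZ i₀ k z₁, ?_⟩
        rw [← hr₁]
        intro i
        by_cases hi : i = i₀
        · subst hi
          have e : extZ i k z₁ i = k := dif_pos rfl
          simp only [e, h10]
          constructor
          · linarith
          · linarith
        · have e : extZ i₀ k z₁ i = z₁ ⟨i, hi⟩ := dif_neg hi
          simp only [e]
          exact hz₁ ⟨i, hi⟩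

end KP


/-- If `ℝ^d` (`d ≥ 1`) admits a faceshare-free cube tiling, then it admits a
periodic faceshare-free cube tiling. -/
theorem periodic_reduction (d : ℕ) (hd : 1 ≤ d)
    (h : ∃ T : Set (Fin d → ℝ), IsTiling d T ∧ FaceshareFree d T) :
    ∃ T : Set (Fin d → ℝ), IsTiling d T ∧ FaceshareFree d T ∧ PeriodicTiling d T := by
  classical
  obtain ⟨T₀, hT₀, hFF⟩ := h
  have hT : KP.Tiling' T₀ := by
    intro y
    have hy : y ∈ ⋃ t ∈ T₀, cube d t := by rw [hT₀.2]; trivial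
    simp only [Set.mem_iUnion] at hy
    obtain ⟨t, ht, hyt⟩ := hy
    refine ⟨t, ⟨ht, hyt⟩, ?_⟩
    rintro t' ⟨ht', hyt'⟩
    by_contra hne
    exact Set.disjoint_left.mp (hT₀.1 ht' ht hne) hyt' hyt
  obtain ⟨P, C⟩ := KP.engine d (Fin d) (Fintype.card_fin d) T₀ hT
  set V : (Fin d → Bool) → (Fin d → ℝ) := fun ε => KP.corner hT (KP.pt ε) with hV
  have Vmem : ∀ ε, V ε ∈ T₀ := fun ε => KP.corner_mem hT _
  have Vbnd : ∀ ε j, -1 < V ε j ∧ V ε j ≤ 1 := by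
    intro ε j
    have h1 := KP.mem_corner hT (KP.pt ε) j
    have h2 := KP.pt_bounds ε j
    exact ⟨by linarith [h1.2, h2.1], by linarith [h1.1, h2.2]⟩
  refine ⟨{s | ∃ (ε : Fin d → Bool) (z : Fin d → ℤ), s = fun i => V ε i + 2 * (z i : ℝ)}, ⟨?_, ?_⟩, ?_, ?_⟩
  · -- pairwise disjoint
    rintro s₁ ⟨ε₁, z₁, rfl⟩ s₂ ⟨ε₂, z₂, rfl⟩ hne
    rw [Set.disjoint_left]
    intro y hy₁ hy₂
    have k1 : (fun i => y i - 2 * (z₁ i : ℝ)) ∈ KP.cube' (V ε₁) := by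
      intro i
      have h3 := hy₁ i
      simp only at h3
      change V ε₁ i ≤ y i - 2 * (z₁ i : ℝ) ∧ y i - 2 * (z₁ i : ℝ) < V ε₁ i + 1
      exact ⟨by linarith [h3.1], by linarith [h3.2]⟩
    have k2 : (fun i => (y i - 2 * (z₁ i : ℝ)) - 2 * ((z₂ i - z₁ i : ℤ) : ℝ)) ∈
        KP.cube' (V ε₂) := by
      intro i
      have h3 := hy₂ i
      simp only at h3
      change V ε₂ i ≤ y i - 2 * (z₁ i : ℝ) - 2 * ((z₂ i - z₁ i : ℤ) : ℝ) ∧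
        y i - 2 * (z₁ i : ℝ) - 2 * ((z₂ i - z₁ i : ℤ) : ℝ) < V ε₂ i + 1
      push_cast
      exact ⟨by linarith [h3.1], by linarith [h3.2]⟩
    obtain ⟨hε, hz⟩ := P ε₁ ε₂ (fun i => z₂ i - z₁ i) _ k1 k2
    apply hne
    funext i
    have h0 : z₂ i - z₁ i = 0 := by have := congrFun hz i; simpa using this
    have hz0 : z₁ i = z₂ i := by omega
    rw [hε, hz0]
  · -- union is everything
    apply Set.eq_univ_of_forall
    intro y
    obtain ⟨ε, z, hm⟩ := C y
    simp only [Set.mem_iUnion]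
    refine ⟨fun i => V ε i + 2 * (z i : ℝ), ⟨ε, z, rfl⟩, ?_⟩
    intro i
    have h3 := hm i
    simp only at h3
    change V ε i + 2 * (z i : ℝ) ≤ y i ∧ y i < V ε i + 2 * (z i : ℝ) + 1
    exact ⟨by linarith [h3.1], by linarith [h3.2]⟩
  · -- faceshare-free
    rintro s₁ ⟨ε₁, z₁, rfl⟩ s₂ ⟨ε₂, z₂, rfl⟩ hne ⟨i, hcase⟩
    have main : ∀ σ : ℝ, (σ = 1 ∨ σ = -1) →
        (∀ j, V ε₂ j + 2 * (z₂ j : ℝ) = V ε₁ j + 2 * (z₁ j : ℝ) + (if j = i then σ else 0)) →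
        False := by
      intro σ hσ hej
      have hoff : ∀ j, j ≠ i → V ε₂ j = V ε₁ j := by
        intro j hj
        have hjj := hej j
        rw [if_neg hj] at hjj
        have hb1 := Vbnd ε₁ j
        have hb2 := Vbnd ε₂ j
        have hq1 : ((z₁ j - z₂ j : ℤ) : ℝ) < 1 := by push_cast; linarith
        have hq2 : (-1 : ℝ) < ((z₁ j - z₂ j : ℤ) : ℝ) := by push_cast; linarith
        have hq1' : z₁ j - z₂ j < 1 := by exact_mod_cast hq1
        have hq2' : (-1 : ℤ) < z₁ j - z₂ j := by exact_mod_cast hq2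
        have hz0 : z₁ j = z₂ j := by omega
        rw [hz0] at hjj
        linarith
      have hei := hej i
      rw [if_pos rfl] at hei
      have hb1 := Vbnd ε₁ i
      have hb2 := Vbnd ε₂ i
      set m : ℤ := z₁ i - z₂ i with hm
      have hDi : V ε₂ i = V ε₁ i + (2 * (m : ℝ) + σ) := by
        have : ((m : ℤ) : ℝ) = (z₁ i : ℝ) - (z₂ i : ℝ) := by rw [hm]; push_cast; ring
        rw [this]; linarith
      have hcases : V ε₂ = V ε₁ + stdBasis d i ∨ V ε₂ = V ε₁ - stdBasis d i := by
        have hstep : 2 * (m : ℝ) + σ = 1 ∨ 2 * (m : ℝ) + σ = -1 := by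
          rcases hσ with h' | h' <;> subst h'
          · have c1 : (m : ℝ) < 1 := by linarith
            have c2 : (-2 : ℝ) < (m : ℝ) := by linarith
            have c1' : m < 1 := by exact_mod_cast c1
            have c2' : (-2 : ℤ) < m := by exact_mod_cast c2
            have hm01 : m = 0 ∨ m = -1 := by omega
            rcases hm01 with h0 | h0 <;> rw [h0] <;> norm_num
          · have c1 : (m : ℝ) < 2 := by linarith
            have c2 : (-1 : ℝ) < (m : ℝ) := by linarith
            have c1' : m < 2 := by exact_mod_cast c1
            have c2' : (-1 : ℤ) < m := by exact_mod_cast c2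
            have hm01 : m = 0 ∨ m = 1 := by omega
            rcases hm01 with h0 | h0 <;> rw [h0] <;> norm_num
        rcases hstep with hs | hs
        · left
          funext j
          by_cases hj : j = i
          · subst hj
            rw [hs] at hDi
            simp [stdBasis, hDi]
          · simp [stdBasis, hj, hoff j hj]
        · right
          funext j
          by_cases hj : j = i
          · subst hj
            rw [hs] at hDi
            simp [stdBasis, hDi]
            ring
          · simp [stdBasis, hj, hoff j hj]
      have hVne : V ε₁ ≠ V ε₂ := by
        intro hEq
        rcases hcases with hc | hc
        · have h4 := congrFun hc i
          rw [← hEq] at h4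
          simp only [Pi.add_apply, stdBasis, eq_self_iff_true, if_true] at h4
          linarith
        · have h4 := congrFun hc i
          rw [← hEq] at h4
          simp only [Pi.sub_apply, stdBasis, eq_self_iff_true, if_true] at h4
          linarith
      exact hFF (V ε₁) (Vmem ε₁) (V ε₂) (Vmem ε₂) hVne ⟨i, hcases⟩
    rcases hcase with he | he
    · refine main 1 (Or.inl rfl) fun j => ?_
      have h4 := congrFun he j
      simp only [Pi.add_apply] at h4
      rw [h4]
      simp [stdBasis]
    · refine main (-1) (Or.inr rfl) fun j => ?_
      have h4 := congrFun he j
      simp only [Pi.sub_apply] at h4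
      rw [h4]
      by_cases hj : j = i <;> simp [stdBasis, hj] <;> ring
  · -- periodic
    rintro t ⟨ε, z, rfl⟩ z'
    refine ⟨ε, fun j => z j + z' j, ?_⟩
    funext j
    push_cast
    ring
end

section
/- Every periodic cube tiling of ℝ^d (d ≥ 1) is 2^{d−1}-discrete: for each coordinate i ∈ {1,...,d}, the set of residues {t_i mod 1 : t ∈ T} has at most 2^{d−1} elements. -/
section Aux
open Set MeasureTheory
open scoped ENNReal

lemma cube_mem_iff {d : ℕ} {x y : Fin d → ℝ} :
    y ∈ cube d x ↔ ∀ i, x i ≤ y i ∧ y i < x i + 1 := Iff.rfl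

/-- Reduce a tile into `[0,2)^d`, preserving all fractional parts. -/
lemma exists_reduce {d : ℕ} {T : Set (Fin d → ℝ)} (hP : PeriodicTiling d T)
    {t : Fin d → ℝ} (ht : t ∈ T) :
    ∃ u ∈ T, (∀ j, 0 ≤ u j ∧ u j < 2) ∧ (∀ j, Int.fract (u j) = Int.fract (t j)) ∧
      ∃ z : Fin d → ℤ, ∀ j, u j = t j + 2 * (z j : ℝ) := by
  refine ⟨fun j => t j + 2 * ((-⌊t j / 2⌋ : ℤ) : ℝ), hP t ht _, ?_, ?_, ⟨_, fun j => rfl⟩⟩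
  · intro j
    have h1 := Int.floor_le (t j / 2)
    have h2 := Int.lt_floor_add_one (t j / 2)
    constructor <;> push_cast <;> linarith
  · intro j
    show Int.fract (t j + 2 * ((-⌊t j / 2⌋ : ℤ) : ℝ)) = Int.fract (t j)
    have h : t j + 2 * ((-⌊t j / 2⌋ : ℤ) : ℝ) = t j + ((2 * -⌊t j / 2⌋ : ℤ) : ℝ) := by
      push_cast; ring
    rw [h, Int.fract_add_intCast]

/-- In a tiling, for any tile there is a tile exactly one unit above in direction `i`. -/
lemma exists_next {d : ℕ} {T : Set (Fin d → ℝ)} (hT : IsTiling d T)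
    {t : Fin d → ℝ} (ht : t ∈ T) (i : Fin d) :
    ∃ t' ∈ T, t' i = t i + 1 := by
  have hy : (fun j => if j = i then t i + 1 else t j) ∈ ⋃ t ∈ T, cube d t := by
    rw [hT.2]; trivial
  simp only [Set.mem_iUnion] at hy
  obtain ⟨t', ht', hmem⟩ := hy
  rw [cube_mem_iff] at hmem
  refine ⟨t', ht', ?_⟩
  have hi := hmem i
  simp only [eq_self_iff_true, if_true] at hi
  by_contra hne
  have hlt : t' i < t i + 1 := lt_of_le_of_ne hi.1 hne
  have hgt : t i < t' i := by linarith [hi.2]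
  have hne' : t ≠ t' := fun h => absurd (congrFun h i) (ne_of_lt hgt)
  have hpt : (fun j => if j = i then t' i else t j) ∈ cube d t := by
    rw [cube_mem_iff]
    intro j
    by_cases hj : j = i
    · subst hj; simp only [eq_self_iff_true, if_true]
      exact ⟨le_of_lt hgt, hlt⟩
    · simp only [if_neg hj]; constructor <;> linarith
  have hpt' : (fun j => if j = i then t' i else t j) ∈ cube d t' := by
    rw [cube_mem_iff]
    intro j
    by_cases hj : j = i
    · subst hj; simp only [eq_self_iff_true, if_true]
      constructor <;> linarith
    · simp only [if_neg hj]
      have h := hmem j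
      simp only [if_neg hj] at h
      exact h
  exact Set.disjoint_left.mp (hT.1 ht ht' hne') hpt hpt'

/-- Per-coordinate wrapped interval. -/
def Kset (a : ℝ) : Set ℝ := (Ico a (a + 1) ∪ Ico (a - 2) (a - 1)) ∩ Ico 0 2

lemma measurable_Kset (a : ℝ) : MeasurableSet (Kset a) :=
  (measurableSet_Ico.union measurableSet_Ico).inter measurableSet_Ico

lemma vol_Kset {a : ℝ} (h0 : 0 ≤ a) (h2 : a < 2) : volume (Kset a) = 1 := by
  have hK : Kset a = Ico a (min (a + 1) 2) ∪ Ico 0 (a - 1) := by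
    rw [Kset, Set.union_inter_distrib_right, Set.Ico_inter_Ico, Set.Ico_inter_Ico,
      max_eq_left h0, max_eq_right (show a - 2 ≤ 0 by linarith),
      min_eq_left (show a - 1 ≤ 2 by linarith)]
  have hdj : Disjoint (Ico a (min (a + 1) 2)) (Ico (0:ℝ) (a - 1)) := by
    rw [Set.disjoint_left]
    rintro x ⟨hx1, _⟩ ⟨_, hx2⟩
    linarith
  rw [hK, measure_union hdj measurableSet_Ico, Real.volume_Ico, Real.volume_Ico]
  rcases le_or_gt a 1 with h | h
  · rw [min_eq_left (by linarith)]
    rw [ENNReal.ofReal_eq_zero.mpr (by linarith : a - 1 - 0 ≤ 0)]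
    norm_num
  · rw [min_eq_right (by linarith)]
    rw [← ENNReal.ofReal_add (by linarith) (by linarith)]
    norm_num

lemma vol_W {d : ℕ} {t : Fin d → ℝ} (ht : ∀ j, 0 ≤ t j ∧ t j < 2) :
    volume (Set.pi Set.univ fun j => Kset (t j)) = 1 := by
  rw [volume_pi_pi]
  have h : ∀ j, volume (Kset (t j)) = 1 := fun j => vol_Kset (ht j).1 (ht j).2
  simp [h]

lemma W_disjoint {d : ℕ} {T : Set (Fin d → ℝ)} (hT : IsTiling d T) (hP : PeriodicTiling d T)
    {t t' : Fin d → ℝ} (ht : t ∈ T) (ht' : t' ∈ T)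
    (hb : ∀ j, 0 ≤ t j ∧ t j < 2) (hb' : ∀ j, 0 ≤ t' j ∧ t' j < 2) (hne : t ≠ t') :
    Disjoint (Set.pi Set.univ fun j => Kset (t j)) (Set.pi Set.univ fun j => Kset (t' j)) := by
  classical
  rw [Set.disjoint_left]
  intro x hx hx'
  have key : ∀ s : Fin d → ℝ, (∀ j, x j ∈ Kset (s j)) →
      ∃ z : Fin d → ℤ, ∀ j, s j + 2 * (z j : ℝ) ≤ x j ∧ x j < s j + 2 * (z j : ℝ) + 1 := by
    intro s hs
    refine ⟨fun j => if s j ≤ x j then 0 else -1, fun j => ?_⟩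
    have hj := (hs j).1
    by_cases hc : s j ≤ x j
    · have h : x j ∈ Ico (s j) (s j + 1) := by
        rcases hj with h | h
        · exact h
        · rw [Set.mem_Ico] at h; exfalso; linarith [h.2]
      rw [Set.mem_Ico] at h
      simp only [hc, if_true]
      push_cast
      constructor <;> linarith [h.1, h.2]
    · have h : x j ∈ Ico (s j - 2) (s j - 1) := by
        rcases hj with h | h
        · rw [Set.mem_Ico] at h; exact absurd h.1 hc
        · exact h
      rw [Set.mem_Ico] at h
      simp only [hc, if_false]
      push_cast
      constructor <;> linarith [h.1, h.2]
  obtain ⟨z, hz⟩ := key t (fun j => hx j (Set.mem_univ j))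
  obtain ⟨z', hz'⟩ := key t' (fun j => hx' j (Set.mem_univ j))
  have hs : (fun j => t j + 2 * (z j : ℝ)) ∈ T := hP t ht z
  have hs' : (fun j => t' j + 2 * (z' j : ℝ)) ∈ T := hP t' ht' z'
  have hss : (fun j => t j + 2 * (z j : ℝ)) ≠ (fun j => t' j + 2 * (z' j : ℝ)) := by
    obtain ⟨j, hj⟩ := Function.ne_iff.mp hne
    intro h
    apply hj
    have hjj : t j + 2 * (z j : ℝ) = t' j + 2 * (z' j : ℝ) := congrFun h j
    have h1 := (hb j).1; have h2 := (hb j).2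
    have h1' := (hb' j).1; have h2' := (hb' j).2
    have hk1 : ((2 * (z' j - z j) : ℤ) : ℝ) < 2 := by push_cast; linarith
    have hk2 : (-2 : ℝ) < ((2 * (z' j - z j) : ℤ) : ℝ) := by push_cast; linarith
    have hk3 : (2 * (z' j - z j) : ℤ) < 2 := by exact_mod_cast hk1
    have hk4 : (-2 : ℤ) < (2 * (z' j - z j) : ℤ) := by exact_mod_cast hk2
    have hk0 : z' j = z j := by omega
    rw [hk0] at hjj
    linarith
  have hd := hT.1 hs hs' hss
  have hxs : x ∈ cube d (fun j => t j + 2 * (z j : ℝ)) := fun j => hz j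
  have hxs' : x ∈ cube d (fun j => t' j + 2 * (z' j : ℝ)) := fun j => hz' j
  exact Set.disjoint_left.mp hd hxs hxs'

lemma card_bound {d : ℕ} {T : Set (Fin d → ℝ)} (hT : IsTiling d T) (hP : PeriodicTiling d T)
    (S : Finset (Fin d → ℝ)) (hS : ∀ t ∈ S, t ∈ T ∧ ∀ j, 0 ≤ t j ∧ t j < 2) :
    S.card ≤ 2 ^ d := by
  have hdisj : (↑S : Set (Fin d → ℝ)).PairwiseDisjoint
      (fun t => Set.pi Set.univ fun j => Kset (t j)) := by
    intro a ha b hb hab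
    exact W_disjoint hT hP (hS a (Finset.mem_coe.mp ha)).1 (hS b (Finset.mem_coe.mp hb)).1
      (hS a (Finset.mem_coe.mp ha)).2 (hS b (Finset.mem_coe.mp hb)).2 hab
  have hmeas : ∀ t ∈ S, MeasurableSet (Set.pi Set.univ fun j => Kset (t j)) := fun t _ =>
    MeasurableSet.univ_pi fun j => measurable_Kset _
  have hsum := measure_biUnion_finset (μ := volume) hdisj hmeas
  have hsub : (⋃ t ∈ S, Set.pi Set.univ fun j => Kset (t j)) ⊆
      Set.pi Set.univ fun _ => Ico (0:ℝ) 2 := by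
    intro x hx
    simp only [Set.mem_iUnion] at hx
    obtain ⟨t, _, hxt⟩ := hx
    intro j _
    exact (hxt j (Set.mem_univ j)).2
  have hbox : volume (Set.pi Set.univ fun _ : Fin d => Ico (0:ℝ) 2) = 2 ^ d := by
    rw [volume_pi_pi]
    have h2 : volume (Ico (0:ℝ) 2) = 2 := by
      rw [Real.volume_Ico]
      norm_num
    simp [h2]
  have hle : (S.card : ℝ≥0∞) ≤ 2 ^ d := by
    calc (S.card : ℝ≥0∞) = ∑ t ∈ S, volume (Set.pi Set.univ fun j => Kset (t j)) := by
          rw [Finset.sum_congr rfl (fun t htS => vol_W (hS t htS).2)]; simp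
      _ = volume (⋃ t ∈ S, Set.pi Set.univ fun j => Kset (t j)) := hsum.symm
      _ ≤ volume (Set.pi Set.univ fun _ : Fin d => Ico (0:ℝ) 2) := measure_mono hsub
      _ = 2 ^ d := hbox
  have hle' : (S.card : ℝ≥0∞) ≤ ((2 ^ d : ℕ) : ℝ≥0∞) := by push_cast; exact hle
  exact_mod_cast hle'

end Aux

/-- Every periodic cube tiling of `ℝ^d` (`d ≥ 1`) is `2^(d-1)`-discrete. -/
theorem periodic_tiling_discrete (d : ℕ) (hd : 1 ≤ d) (T : Set (Fin d → ℝ))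
    (hT : IsTiling d T) (hP : PeriodicTiling d T) :
    SDiscrete d (2 ^ (d - 1)) T := by
  classical
  intro i
  have hFfin : {t : Fin d → ℝ | t ∈ T ∧ ∀ j, 0 ≤ t j ∧ t j < 2}.Finite := by
    by_contra h
    obtain ⟨S, hS, hcard⟩ := (Set.Infinite.exists_subset_card_eq h) (2 ^ d + 1)
    have hbd := card_bound hT hP S (fun t ht => hS (Finset.mem_coe.mpr ht))
    omega
  obtain ⟨FS, hmemFS⟩ : ∃ FS : Finset (Fin d → ℝ),
      ∀ t, t ∈ FS ↔ t ∈ T ∧ ∀ j, 0 ≤ t j ∧ t j < 2 :=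
    ⟨hFfin.toFinset, fun t => hFfin.mem_toFinset⟩
  have hcardF : FS.card ≤ 2 ^ d :=
    card_bound hT hP FS (fun t ht => (hmemFS t).mp ht)
  refine ⟨FS.image (fun t => Int.fract (t i)), ?_, ?_⟩
  · -- cardinality bound
    have hfib : ∀ r ∈ FS.image (fun t => Int.fract (t i)),
        2 ≤ (FS.filter fun t => Int.fract (t i) = r).card := by
      intro r hr
      obtain ⟨t, htFS, hrt⟩ := Finset.mem_image.mp hr
      have htF := (hmemFS t).mp htFS
      obtain ⟨t', ht'T, ht'i⟩ := exists_next hT htF.1 i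
      obtain ⟨u, huT, hub, huf, z, hz⟩ := exists_reduce hP ht'T
      have huFS : u ∈ FS := (hmemFS u).mpr ⟨huT, hub⟩
      have hufr : Int.fract (u i) = Int.fract (t i) := by
        rw [huf i, ht'i, Int.fract_add_one]
      have hune : t ≠ u := by
        intro h
        have hui : u i = t i + 1 + 2 * (z i : ℝ) := by rw [hz i, ht'i]
        have hti : u i = t i := by rw [← h]
        have hc1 : ((1 + 2 * z i : ℤ) : ℝ) = 0 := by push_cast; linarith
        have hc2 : (1 + 2 * z i : ℤ) = 0 := by exact_mod_cast hc1
        omega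
      have hsubset : ({t, u} : Finset (Fin d → ℝ)) ⊆
          FS.filter fun s => Int.fract (s i) = r := by
        intro s hs
        rcases Finset.mem_insert.mp hs with h | h
        · rw [h]; exact Finset.mem_filter.mpr ⟨htFS, hrt⟩
        · rw [Finset.mem_singleton] at h
          rw [h]; exact Finset.mem_filter.mpr ⟨huFS, hufr.trans hrt⟩
      calc 2 = ({t, u} : Finset (Fin d → ℝ)).card := (Finset.card_pair hune).symm
        _ ≤ _ := Finset.card_le_card hsubset
    have hsum := Finset.card_eq_sum_card_image (fun t => Int.fract (t i)) FS
    have h2 : 2 * (FS.image (fun t => Int.fract (t i))).card ≤ FS.card := by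
      rw [hsum]
      calc 2 * (FS.image (fun t => Int.fract (t i))).card
          = ∑ _r ∈ FS.image (fun t => Int.fract (t i)), 2 := by
            rw [Finset.sum_const, smul_eq_mul, mul_comm]
        _ ≤ _ := Finset.sum_le_sum hfib
    have hpow : 2 * 2 ^ (d - 1) = 2 ^ d := by
      rw [← pow_succ']
      congr 1
      exact Nat.sub_add_cancel hd
    have hfin : 2 * (FS.image (fun t => Int.fract (t i))).card ≤ 2 * 2 ^ (d - 1) := by
      rw [hpow]
      exact le_trans h2 hcardF
    exact Nat.le_of_mul_le_mul_left hfin (by norm_num)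
  · intro t htT
    obtain ⟨u, huT, hub, huf, -⟩ := exists_reduce hP htT
    exact Finset.mem_image.mpr ⟨u, (hmemFS u).mpr ⟨huT, hub⟩, huf i⟩
end
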